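/- Let n ≥ 2 and let p₀ : ℝⁿ ∖ {0} → ℂ be continuous and positively homogeneous of degree zero (p₀(rξ) = p₀(ξ) for all r > 0 and ξ ≠ 0), and assume p₀(0,…,0,1) = p₀(0,…,0,−1). Write ξ = (ξ′, ξₙ) ∈ ℝ^{n−1} × ℝ. Then: (i) for each ξ′ ≠ 0 the function ξₙ ↦ p₀(ξ′, ξₙ) is admissible; (ii) ‖p₀(ξ′,·)(D)₊‖ = sup_{ξₙ∈ℝ} |p₀(ξ′, ξₙ)|, and this quantity is independent of |ξ′|, i.e. ‖p₀(sξ′,·)(D)₊‖ = ‖p₀(ξ′,·)(D)₊‖ for all s > 0; (iii) sup_{ξ′≠0} ‖p₀(ξ′,·)(D)₊‖ = sup_{ξ≠0} |p₀(ξ)|. -/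

import Mathlib

open MeasureTheory Filter

noncomputable section

abbrev L2R : Type := Lp ℂ 2 (volume : Measure ℝ)
abbrev L2pos : Type := Lp ℂ 2 ((volume : Measure ℝ).restrict (Set.Ioi (0:ℝ)))

def extendZero (ψ : L2pos) : L2R :=
  MemLp.toLp (Set.indicator (Set.Ioi (0:ℝ)) ψ)
    ((memLp_indicator_iff_restrict measurableSet_Ioi).2 (Lp.memLp ψ))

def restrictPos (h : L2R) : L2pos :=
  MemLp.toLp (⇑h) ((Lp.memLp h).restrict _)

def FourierConvention (F : L2R ≃ₗᵢ[ℂ] L2R) : Prop :=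
  ∀ h : L2R, Integrable (⇑h) volume →
    (⇑(F h) : ℝ → ℂ) =ᵐ[volume]
      fun t : ℝ => ((Real.sqrt (2 * Real.pi) : ℂ))⁻¹ *
        ∫ ξ : ℝ, Complex.exp (-((t * ξ : ℝ) : ℂ) * Complex.I) * h ξ

def IsTruncMult (F : L2R ≃ₗᵢ[ℂ] L2R) (b : ℝ → ℂ) (T : L2pos →L[ℂ] L2pos) : Prop :=
  ∀ ψ : L2pos, ∃ g : L2R,
    (⇑g : ℝ → ℂ) =ᵐ[volume] (fun t : ℝ => b t * (F (extendZero ψ)) t) ∧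
    T ψ = restrictPos (F.symm g)

def Admissible (p : ℝ → ℂ) : Prop :=
  Continuous p ∧ ∃ c : ℂ, Tendsto p atTop (nhds c) ∧ Tendsto p atBot (nhds c)

namespace TruncAux
lemma extendZero_coe (ψ : L2pos) :
    ⇑(extendZero ψ) =ᵐ[volume] Set.indicator (Set.Ioi (0:ℝ)) ⇑ψ := MemLp.coeFn_toLp _
lemma restrictPos_coe (h : L2R) :
    ⇑(restrictPos h) =ᵐ[(volume : Measure ℝ).restrict (Set.Ioi (0:ℝ))] ⇑h := MemLp.coeFn_toLp _
lemma indicator_ae_eq_of_restrict {f g : ℝ → ℂ}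
    (h : f =ᵐ[(volume : Measure ℝ).restrict (Set.Ioi (0:ℝ))] g) :
    Set.indicator (Set.Ioi (0:ℝ)) f =ᵐ[volume] Set.indicator (Set.Ioi (0:ℝ)) g := by
  rw [EventuallyEq, ae_restrict_iff' measurableSet_Ioi] at h
  filter_upwards [h] with x hx
  by_cases hxs : x ∈ Set.Ioi (0:ℝ)
  · simp only [Set.indicator_of_mem hxs, hx hxs]
  · simp only [Set.indicator_of_notMem hxs]
lemma norm_extendZero (ψ : L2pos) : ‖extendZero ψ‖ = ‖ψ‖ := by
  rw [extendZero, Lp.norm_toLp, eLpNorm_indicator_eq_eLpNorm_restrict measurableSet_Ioi,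
    ← Lp.norm_def]
lemma norm_restrictPos_le (h : L2R) : ‖restrictPos h‖ ≤ ‖h‖ := by
  rw [restrictPos, Lp.norm_toLp, Lp.norm_def]
  exact ENNReal.toReal_mono (Lp.eLpNorm_ne_top h)
    (eLpNorm_mono_measure _ Measure.restrict_le_self)

-- chunk 2
variable (F : L2R ≃ₗᵢ[ℂ] L2R)

lemma eLpNorm_mul_le (b : ℝ → ℂ) {M : ℝ} (hM : ∀ x, ‖b x‖ ≤ M) (h : L2R) :
    (eLpNorm (fun t => b t * (h : ℝ → ℂ) t) 2 volume).toReal ≤ M * ‖h‖ := by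
  have hM0 : 0 ≤ M := le_trans (norm_nonneg _) (hM 0)
  have h1 : eLpNorm (fun t => b t * (h : ℝ → ℂ) t) 2 volume
      ≤ eLpNorm (⇑((M : ℂ) • h)) 2 volume := by
    refine le_trans (eLpNorm_mono (g := fun t => (M : ℂ) * (h : ℝ → ℂ) t) ?_) ?_
    · intro t
      rw [norm_mul, norm_mul, Complex.norm_real, Real.norm_of_nonneg hM0]
      exact mul_le_mul_of_nonneg_right (hM t) (norm_nonneg _)
    · refine le_of_eq (eLpNorm_congr_ae ?_)
      filter_upwards [Lp.coeFn_smul (M : ℂ) h] with t ht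
      rw [ht]; rfl
  calc (eLpNorm (fun t => b t * (h : ℝ → ℂ) t) 2 volume).toReal
      ≤ (eLpNorm (⇑((M : ℂ) • h)) 2 volume).toReal :=
        ENNReal.toReal_mono (Lp.eLpNorm_ne_top _) h1
    _ = ‖(M : ℂ) • h‖ := (Lp.norm_def _).symm
    _ = M * ‖h‖ := by rw [norm_smul, Complex.norm_real, Real.norm_of_nonneg hM0]

def mulLp (b : ℝ → ℂ) (hb : AEStronglyMeasurable b volume) {M : ℝ} (hM : ∀ x, ‖b x‖ ≤ M)
    (h : L2R) : L2R :=
  MemLp.toLp (fun t => b t * (h : ℝ → ℂ) t)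
    ((Lp.memLp h).of_le_mul (hb.mul (Lp.aestronglyMeasurable h))
      (Filter.Eventually.of_forall fun t => by
        rw [norm_mul]
        exact mul_le_mul_of_nonneg_right (hM t) (norm_nonneg _)))

lemma mulLp_coe (b : ℝ → ℂ) (hb : AEStronglyMeasurable b volume) {M : ℝ}
    (hM : ∀ x, ‖b x‖ ≤ M) (h : L2R) :
    ⇑(mulLp b hb hM h) =ᵐ[volume] fun t => b t * (h : ℝ → ℂ) t := MemLp.coeFn_toLp _

lemma norm_mulLp_le (b : ℝ → ℂ) (hb : AEStronglyMeasurable b volume) {M : ℝ}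
    (hM : ∀ x, ‖b x‖ ≤ M) (h : L2R) : ‖mulLp b hb hM h‖ ≤ M * ‖h‖ := by
  rw [mulLp, Lp.norm_toLp]; exact eLpNorm_mul_le b hM h

lemma extendZero_add (ψ φ : L2pos) :
    extendZero (ψ + φ) = extendZero ψ + extendZero φ := by
  apply Lp.ext
  have h1 := indicator_ae_eq_of_restrict (Lp.coeFn_add ψ φ)
  filter_upwards [extendZero_coe (ψ + φ), h1, Lp.coeFn_add (extendZero ψ) (extendZero φ),
    extendZero_coe ψ, extendZero_coe φ] with x hx h1x haddx hψx hφx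
  rw [hx, h1x, haddx, Pi.add_apply, hψx, hφx]
  by_cases hxs : x ∈ Set.Ioi (0:ℝ)
  · simp only [Set.indicator_of_mem hxs, Pi.add_apply]
  · simp only [Set.indicator_of_notMem hxs, add_zero]

lemma extendZero_smul (c : ℂ) (ψ : L2pos) :
    extendZero (c • ψ) = c • extendZero ψ := by
  apply Lp.ext
  have h1 := indicator_ae_eq_of_restrict (Lp.coeFn_smul c ψ)
  filter_upwards [extendZero_coe (c • ψ), h1, Lp.coeFn_smul c (extendZero ψ),
    extendZero_coe ψ] with x hx h1x hsx hψx
  rw [hx, h1x, hsx, Pi.smul_apply, hψx]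
  by_cases hxs : x ∈ Set.Ioi (0:ℝ)
  · simp only [Set.indicator_of_mem hxs, Pi.smul_apply]
  · simp only [Set.indicator_of_notMem hxs, smul_zero]

lemma restrictPos_add (h₁ h₂ : L2R) :
    restrictPos (h₁ + h₂) = restrictPos h₁ + restrictPos h₂ := by
  apply Lp.ext
  filter_upwards [restrictPos_coe (h₁ + h₂), ae_restrict_of_ae (Lp.coeFn_add h₁ h₂),
    Lp.coeFn_add (restrictPos h₁) (restrictPos h₂), restrictPos_coe h₁, restrictPos_coe h₂]
    with x hx haddx hsum h1x h2x
  rw [hx, haddx, Pi.add_apply, hsum, Pi.add_apply, h1x, h2x]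

lemma restrictPos_smul (c : ℂ) (h : L2R) :
    restrictPos (c • h) = c • restrictPos h := by
  apply Lp.ext
  filter_upwards [restrictPos_coe (c • h), ae_restrict_of_ae (Lp.coeFn_smul c h),
    Lp.coeFn_smul c (restrictPos h), restrictPos_coe h] with x hx hsx hs h1x
  rw [hx, hsx, Pi.smul_apply, hs, Pi.smul_apply, h1x]

lemma mulLp_add (b : ℝ → ℂ) (hb : AEStronglyMeasurable b volume) {M : ℝ}
    (hM : ∀ x, ‖b x‖ ≤ M) (h₁ h₂ : L2R) :
    mulLp b hb hM (h₁ + h₂) = mulLp b hb hM h₁ + mulLp b hb hM h₂ := by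
  apply Lp.ext
  filter_upwards [mulLp_coe b hb hM (h₁ + h₂), Lp.coeFn_add h₁ h₂,
    Lp.coeFn_add (mulLp b hb hM h₁) (mulLp b hb hM h₂), mulLp_coe b hb hM h₁,
    mulLp_coe b hb hM h₂] with x hx haddx hsum h1x h2x
  rw [hx, hsum, Pi.add_apply, h1x, h2x]
  simp only [haddx, Pi.add_apply, mul_add]

lemma mulLp_smul (b : ℝ → ℂ) (hb : AEStronglyMeasurable b volume) {M : ℝ}
    (hM : ∀ x, ‖b x‖ ≤ M) (c : ℂ) (h : L2R) :
    mulLp b hb hM (c • h) = c • mulLp b hb hM h := by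
  apply Lp.ext
  filter_upwards [mulLp_coe b hb hM (c • h), Lp.coeFn_smul c h,
    Lp.coeFn_smul c (mulLp b hb hM h), mulLp_coe b hb hM h] with x hx hsx hs h1x
  rw [hx, hs, Pi.smul_apply, h1x]
  simp only [hsx, Pi.smul_apply, smul_eq_mul]
  ring

def truncOp (b : ℝ → ℂ) (hb : AEStronglyMeasurable b volume) {M : ℝ}
    (hM : ∀ x, ‖b x‖ ≤ M) : L2pos →L[ℂ] L2pos :=
  LinearMap.mkContinuous
    { toFun := fun ψ => restrictPos (F.symm (mulLp b hb hM (F (extendZero ψ))))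
      map_add' := fun ψ φ => by
        rw [extendZero_add, F.map_add, mulLp_add, F.symm.map_add, restrictPos_add]
      map_smul' := fun c ψ => by
        simp only [RingHom.id_apply]
        rw [ extendZero_smul, F.map_smul, mulLp_smul, F.symm.map_smul,
          restrictPos_smul] }
    M (fun ψ => by
      have h1 : ‖restrictPos (F.symm (mulLp b hb hM (F (extendZero ψ))))‖
          ≤ ‖F.symm (mulLp b hb hM (F (extendZero ψ)))‖ := norm_restrictPos_le _
      rw [F.symm.norm_map] at h1
      refine le_trans h1 (le_trans (norm_mulLp_le b hb hM _) ?_)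
      rw [F.norm_map, norm_extendZero])

lemma isTruncMult_truncOp (b : ℝ → ℂ) (hb : AEStronglyMeasurable b volume) {M : ℝ}
    (hM : ∀ x, ‖b x‖ ≤ M) : IsTruncMult F b (truncOp F b hb hM) :=
  fun ψ => ⟨mulLp b hb hM (F (extendZero ψ)), mulLp_coe b hb hM _, rfl⟩

lemma opNorm_truncMult_le (b : ℝ → ℂ) {M : ℝ} (hM : ∀ x, ‖b x‖ ≤ M)
    (T : L2pos →L[ℂ] L2pos) (hT : IsTruncMult F b T) : ‖T‖ ≤ M := by
  have hM0 : 0 ≤ M := le_trans (norm_nonneg _) (hM 0)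
  refine ContinuousLinearMap.opNorm_le_bound _ hM0 fun ψ => ?_
  obtain ⟨g, hg, hTg⟩ := hT ψ
  rw [hTg]
  refine le_trans (norm_restrictPos_le _) ?_
  rw [F.symm.norm_map, Lp.norm_def, eLpNorm_congr_ae hg]
  refine le_trans (eLpNorm_mul_le b hM _) ?_
  rw [F.norm_map, norm_extendZero]


section Lower

open Complex

lemma inner_extendZero_left (ψ : L2pos) (h : L2R) :
    (inner ℂ (extendZero ψ) h : ℂ) = inner ℂ ψ (restrictPos h) := by
  rw [MeasureTheory.L2.inner_def, MeasureTheory.L2.inner_def]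
  have h1 : (fun x => (inner ℂ ((extendZero ψ : ℝ → ℂ) x) ((h : ℝ → ℂ) x) : ℂ))
      =ᵐ[volume] Set.indicator (Set.Ioi (0:ℝ))
        (fun x => (inner ℂ ((ψ : ℝ → ℂ) x) ((h : ℝ → ℂ) x) : ℂ)) := by
    filter_upwards [extendZero_coe ψ] with x hx
    rw [hx]
    by_cases hxs : x ∈ Set.Ioi (0:ℝ)
    · simp only [Set.indicator_of_mem hxs]
    · simp only [Set.indicator_of_notMem hxs, inner_zero_left]
  rw [integral_congr_ae h1, integral_indicator measurableSet_Ioi]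
  apply integral_congr_ae
  filter_upwards [restrictPos_coe h] with x hx
  rw [hx]

lemma inner_self_ofReal (z : ℂ) : (inner ℂ z z : ℂ) = ((‖z‖^2 : ℝ) : ℂ) := by
  rw [inner_self_eq_norm_sq_to_K]
  norm_cast

/-- integral of (x-ξ₀)⁻² over Ici (ξ₀+δ). -/
lemma integral_inv_sq_Ici (ξ₀ δ : ℝ) (hδ : 0 < δ) :
    IntegrableOn (fun x : ℝ => ((x - ξ₀)^2)⁻¹) (Set.Ici (ξ₀ + δ)) volume ∧
      ∫ x in Set.Ici (ξ₀ + δ), ((x - ξ₀)^2)⁻¹ = δ⁻¹ := by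
  have hderiv : ∀ x ∈ Set.Ioi (ξ₀ + δ), HasDerivAt (fun y : ℝ => -(y - ξ₀)⁻¹)
      (((x - ξ₀)^2)⁻¹) x := by
    intro x hx
    have hx0 : x - ξ₀ ≠ 0 := by
      have : ξ₀ + δ < x := hx
      nlinarith [hδ]
    have h1 : HasDerivAt (fun y : ℝ => -(y - ξ₀)⁻¹) (-(-1 / (x - ξ₀)^2)) x :=
      (((hasDerivAt_id x).sub_const ξ₀).inv hx0).neg
    convert h1 using 1
    ring
  have hcont : ContinuousWithinAt (fun y : ℝ => -(y - ξ₀)⁻¹) (Set.Ici (ξ₀ + δ)) (ξ₀ + δ) := by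
    apply ContinuousAt.continuousWithinAt
    have : (ξ₀ + δ) - ξ₀ ≠ 0 := by simp; nlinarith [hδ]
    exact ((continuousAt_id.sub continuousAt_const).inv₀ this).neg
  have hpos : ∀ x ∈ Set.Ioi (ξ₀ + δ), 0 ≤ ((x - ξ₀)^2)⁻¹ := fun x _ => by positivity
  have htend : Tendsto (fun y : ℝ => -(y - ξ₀)⁻¹) atTop (nhds 0) := by
    rw [show (0:ℝ) = -0 by ring]
    exact (Filter.Tendsto.inv_tendsto_atTop (tendsto_atTop_add_const_right _ (-ξ₀) tendsto_id)).neg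
  constructor
  · rw [integrableOn_Ici_iff_integrableOn_Ioi]
    exact integrableOn_Ioi_deriv_of_nonneg hcont hderiv hpos htend
  · rw [integral_Ici_eq_integral_Ioi,
      integral_Ioi_of_hasDerivAt_of_nonneg hcont hderiv hpos htend]
    simp

lemma integral_inv_sq_Iic (ξ₀ δ : ℝ) (hδ : 0 < δ) :
    IntegrableOn (fun x : ℝ => ((x - ξ₀)^2)⁻¹) (Set.Iic (ξ₀ - δ)) volume ∧
      ∫ x in Set.Iic (ξ₀ - δ), ((x - ξ₀)^2)⁻¹ = δ⁻¹ := by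
  have base := integral_inv_sq_Ici (-ξ₀) δ hδ
  have hkey : ∀ x : ℝ, (((-x) - (-ξ₀))^2)⁻¹ = ((x - ξ₀)^2)⁻¹ := by
    intro x; congr 1; ring
  constructor
  · have h1 := (MeasurePreserving.integrableOn_comp_preimage
      (Measure.measurePreserving_neg (volume : Measure ℝ))
      (Homeomorph.neg ℝ).measurableEmbedding).2 base.1
    have h2 : (Neg.neg ⁻¹' Set.Ici ((-ξ₀) + δ) : Set ℝ) = Set.Iic (ξ₀ - δ) := by
      ext x
      simp only [Set.mem_preimage, Set.mem_Ici, Set.mem_Iic]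
      constructor <;> intro h <;> linarith
    rw [h2] at h1
    refine h1.congr_fun ?_ measurableSet_Iic
    intro x _
    simp only [Function.comp_apply]
    exact hkey x
  · have h1 := integral_comp_neg_Iic (ξ₀ - δ) (fun y : ℝ => ((y - (-ξ₀))^2)⁻¹)
    have h2 : ∀ x : ℝ, ((-x - (-ξ₀))^2)⁻¹ = ((x - ξ₀)^2)⁻¹ := hkey
    simp only [h2] at h1
    rw [h1, show -(ξ₀ - δ) = (-ξ₀) + δ by ring, ← integral_Ici_eq_integral_Ioi, base.2]

end Lower


section KeyEstimate

open Complex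

lemma key_estimate (F : L2R ≃ₗᵢ[ℂ] L2R) (hF : FourierConvention F) (b : ℝ → ℂ)
    (hb : Continuous b) {M : ℝ} (hM : ∀ x, ‖b x‖ ≤ M)
    (T : L2pos →L[ℂ] L2pos) (hT : IsTruncMult F b T)
    (ξ₀ : ℝ) {δ ε : ℝ} (hδ : 0 < δ) (hε : 0 ≤ ε)
    (hnear : ∀ x : ℝ, |x - ξ₀| < δ → ‖b x - b ξ₀‖ ≤ ε)
    {R : ℝ} (hR : 0 < R) :
    ‖b ξ₀‖ * R ≤ ‖T‖ * R + ε * R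
      + 2 * M * ((Real.sqrt (2*Real.pi))⁻¹^2 * 8 / δ) := by
  have hM0 : 0 ≤ M := le_trans (norm_nonneg _) (hM 0)
  set s : ℝ := Real.sqrt (2 * Real.pi) with hs
  have hspos : 0 < s := Real.sqrt_pos.mpr (by positivity)
  -- test function
  set e : ℝ → ℂ := fun t => Complex.exp ((ξ₀ * t : ℝ) * Complex.I) with he
  have hecont : Continuous e := by
    apply Complex.continuous_exp.comp
    exact (Complex.continuous_ofReal.comp (continuous_const.mul continuous_id)).mul
      continuous_const
  have henorm : ∀ t, ‖e t‖ = 1 := fun t => by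
    rw [he, Complex.norm_exp_ofReal_mul_I]
  set f : ℝ → ℂ := Set.indicator (Set.Ioc 0 R) e with hf
  have hfmeas : AEStronglyMeasurable f volume :=
    hecont.aestronglyMeasurable.indicator measurableSet_Ioc
  have hfmem : MemLp f 2 volume := by
    refine MemLp.of_le (g := Set.indicator (Set.Ioc (0:ℝ) R) (fun _ => (1:ℝ)))
      (memLp_indicator_const 2 measurableSet_Ioc (1:ℝ)
        (Or.inr measure_Ioc_lt_top.ne)) hfmeas ?_
    refine Filter.Eventually.of_forall fun t => ?_
    by_cases ht : t ∈ Set.Ioc (0:ℝ) R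
    · simp [hf, Set.indicator_of_mem ht, henorm]
    · simp [hf, Set.indicator_of_notMem ht]
  set ψ : L2pos := MemLp.toLp f (hfmem.restrict _) with hψdef
  have hψcoe : ⇑ψ =ᵐ[(volume : Measure ℝ).restrict (Set.Ioi 0)] f := MemLp.coeFn_toLp _
  have hIoc_sub : Set.Ioc (0:ℝ) R ⊆ Set.Ioi 0 := Set.Ioc_subset_Ioi_self
  have hEcoe : ⇑(extendZero ψ) =ᵐ[volume] f := by
    refine (extendZero_coe ψ).trans ((indicator_ae_eq_of_restrict hψcoe).trans ?_)
    refine Filter.Eventually.of_forall fun x => ?_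
    rw [hf, Set.indicator_indicator, Set.inter_eq_self_of_subset_right hIoc_sub]
  have hfint : Integrable f volume := by
    rw [hf, integrable_indicator_iff measurableSet_Ioc]
    exact hecont.integrableOn_Ioc
  have hEint : Integrable (⇑(extendZero ψ)) volume := hfint.congr hEcoe.symm
  -- the Fourier transform side
  set u : L2R := F (extendZero ψ) with hu
  set V : ℝ → ℂ := fun x => ((s:ℝ):ℂ)⁻¹ * ∫ t : ℝ,
    Complex.exp (-((x*t : ℝ):ℂ) * Complex.I) * f t with hV
  have hvV : ⇑u =ᵐ[volume] V := by
    refine (hF (extendZero ψ) hEint).trans (Filter.Eventually.of_forall fun x => ?_)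
    show _ = V x
    rw [hV]
    simp only [← hs]
    congr 1
    refine integral_congr_ae ?_
    filter_upwards [hEcoe] with t ht
    rw [ht]
  have hVval : ∀ x : ℝ, x ≠ ξ₀ → V x = ((s:ℝ):ℂ)⁻¹ *
      ((Complex.exp ((Complex.I * ((ξ₀ - x : ℝ):ℂ)) * (R:ℂ)) - 1)
        / (Complex.I * ((ξ₀ - x : ℝ):ℂ))) := by
    intro x hx
    have hc : (Complex.I * ((ξ₀ - x : ℝ):ℂ)) ≠ 0 := by
      exact mul_ne_zero Complex.I_ne_zero
        (Complex.ofReal_ne_zero.mpr (sub_ne_zero.mpr (Ne.symm hx)))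
    have h1 : ∀ t : ℝ, Complex.exp (-((x*t : ℝ):ℂ) * Complex.I) * f t
        = Set.indicator (Set.Ioc 0 R)
          (fun t : ℝ => Complex.exp ((Complex.I * ((ξ₀ - x : ℝ):ℂ)) * (t:ℂ))) t := by
      intro t
      by_cases ht : t ∈ Set.Ioc (0:ℝ) R
      · rw [hf, Set.indicator_of_mem ht, Set.indicator_of_mem ht, he, ← Complex.exp_add]
        congr 1
        push_cast
        ring
      · rw [hf, Set.indicator_of_notMem ht, Set.indicator_of_notMem ht, mul_zero]
      
    rw [hV]
    simp only [h1]
    rw [integral_indicator measurableSet_Ioc, ← intervalIntegral.integral_of_le hR.le,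
      integral_exp_mul_complex hc]
    congr 1
    rw [Complex.ofReal_zero, mul_zero, Complex.exp_zero]
  have hVbound : ∀ x : ℝ, x ≠ ξ₀ → ‖V x‖^2 ≤ s⁻¹^2 * 4 * ((x - ξ₀)^2)⁻¹ := by
    intro x hx
    have hxne : (ξ₀ - x : ℝ) ≠ 0 := sub_ne_zero.mpr (Ne.symm hx)
    have h2 : ‖V x‖ ≤ s⁻¹ * (2 * |x - ξ₀|⁻¹) := by
      rw [hVval x hx, norm_mul, norm_div, norm_mul]
      have hnorm1 : ‖(((s:ℝ)):ℂ)⁻¹‖ = s⁻¹ := by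
        rw [norm_inv, Complex.norm_real, Real.norm_of_nonneg hspos.le]
      have hnormI : ‖Complex.I‖ = 1 := Complex.norm_I
      have hnormc : ‖(((ξ₀ - x : ℝ)):ℂ)‖ = |x - ξ₀| := by
        rw [Complex.norm_real, Real.norm_eq_abs, abs_sub_comm]
      have hexp : ‖Complex.exp ((Complex.I * ((ξ₀ - x : ℝ):ℂ)) * (R:ℂ)) - 1‖ ≤ 2 := by
        refine le_trans (norm_sub_le _ _) ?_
        have : ‖Complex.exp ((Complex.I * ((ξ₀ - x : ℝ):ℂ)) * (R:ℂ))‖ = 1 := by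
          rw [Complex.norm_exp]
          convert Real.exp_zero using 2
          simp [Complex.mul_re]
        rw [this, norm_one]
        norm_num
      rw [hnorm1, hnormI, hnormc, one_mul]
      have h3 : 0 < |x - ξ₀| := abs_pos.mpr (sub_ne_zero.mpr hx)
      rw [div_eq_mul_inv]
      gcongr
    have h4 : (0:ℝ) ≤ s⁻¹ * (2 * |x - ξ₀|⁻¹) := by positivity
    calc ‖V x‖^2 ≤ (s⁻¹ * (2 * |x - ξ₀|⁻¹))^2 := by
          exact pow_le_pow_left₀ (norm_nonneg _) h2 2
      _ = s⁻¹^2 * 4 * ((x - ξ₀)^2)⁻¹ := by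
          simp only [mul_pow, inv_pow, _root_.sq_abs]
          ring

  -- squared modulus of the Fourier transform
  set w : ℝ → ℝ := fun x => ‖(u : ℝ → ℂ) x‖^2 with hw
  have hwx : ∀ x, w x = ‖(u : ℝ → ℂ) x‖^2 := fun _ => rfl
  have hw0 : ∀ x, 0 ≤ w x := fun x => sq_nonneg _
  have hinnerpt : (fun x => (inner ℂ ((u : ℝ → ℂ) x) ((u : ℝ → ℂ) x) : ℂ))
      = fun x => ((w x : ℝ) : ℂ) := by
    funext x
    rw [hwx]
    exact inner_self_ofReal _
  have hiw : Integrable w volume := by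
    have h1 : Integrable (fun x => (inner ℂ ((u : ℝ → ℂ) x) ((u : ℝ → ℂ) x) : ℂ)) volume :=
      MeasureTheory.L2.integrable_inner (𝕜 := ℂ) u u
    rw [hinnerpt] at h1
    refine h1.re.congr (Filter.Eventually.of_forall fun x => ?_)
    simp
  have hptIoc : ∀ x : ℝ, (inner ℂ (f x) (f x) : ℂ)
      = Set.indicator (Set.Ioc (0:ℝ) R) (fun _ => (1:ℂ)) x := by
    intro x
    rw [inner_self_ofReal]
    by_cases ht : x ∈ Set.Ioc (0:ℝ) R
    · rw [hf, Set.indicator_of_mem ht, Set.indicator_of_mem ht, henorm]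
      norm_num
    · rw [hf, Set.indicator_of_notMem ht, Set.indicator_of_notMem ht]
      norm_num
  have hinnE : (inner ℂ (extendZero ψ) (extendZero ψ) : ℂ) = (R : ℂ) := by
    rw [MeasureTheory.L2.inner_def]
    have h1 : (fun x => (inner ℂ ((extendZero ψ : ℝ → ℂ) x) ((extendZero ψ : ℝ → ℂ) x) : ℂ))
        =ᵐ[volume] Set.indicator (Set.Ioc (0:ℝ) R) (fun _ => (1:ℂ)) := by
      filter_upwards [hEcoe] with x hx
      rw [hx]
      exact hptIoc x
    rw [integral_congr_ae h1, integral_indicator_const _ measurableSet_Ioc]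
    simp [Real.volume_Ioc, hR.le]
  have hinnu : (inner ℂ u u : ℂ) = (R : ℂ) := by
    rw [hu, LinearIsometryEquiv.inner_map_map]
    exact hinnE
  have hwR : ∫ x, w x = R := by
    have h1 : ∫ x, ((w x : ℝ) : ℂ) = ((R : ℝ) : ℂ) := by
      calc ∫ x, ((w x : ℝ) : ℂ)
          = ∫ x, (inner ℂ ((u : ℝ → ℂ) x) ((u : ℝ → ℂ) x) : ℂ) := by rw [hinnerpt]
        _ = (inner ℂ u u : ℂ) := (MeasureTheory.L2.inner_def u u).symm
        _ = (R : ℂ) := hinnu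
    have h2 : ∫ x, ((w x : ℝ) : ℂ) = ((∫ x, w x : ℝ) : ℂ) := integral_ofReal
    rw [h2] at h1
    exact_mod_cast h1
  have hψsq : ‖ψ‖^2 = R := by
    have h1 : (inner ℂ ψ ψ : ℂ) = (R : ℂ) := by
      rw [MeasureTheory.L2.inner_def]
      have h2 : (fun x => (inner ℂ ((ψ : ℝ → ℂ) x) ((ψ : ℝ → ℂ) x) : ℂ))
          =ᵐ[(volume : Measure ℝ).restrict (Set.Ioi 0)]
            Set.indicator (Set.Ioc (0:ℝ) R) (fun _ => (1:ℂ)) := by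
        filter_upwards [hψcoe] with x hx
        rw [hx]
        exact hptIoc x
      rw [integral_congr_ae h2, integral_indicator_const _ measurableSet_Ioc,
        measureReal_restrict_apply measurableSet_Ioc,
        Set.inter_eq_self_of_subset_left hIoc_sub]
      simp [Real.volume_real_Ioc, hR.le]
    have h2 := inner_self_eq_norm_sq (𝕜 := ℂ) (x := ψ)
    rw [h1] at h2
    simpa using h2.symm
  -- the inner product identity
  obtain ⟨g, hg, hTg⟩ := hT ψ
  rw [← hu] at hg
  have hInn : (inner ℂ ψ (T ψ) : ℂ) = ∫ x, b x * ((w x : ℝ) : ℂ) := by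
    rw [hTg, ← inner_extendZero_left, ← LinearIsometryEquiv.inner_map_map F (extendZero ψ)
      (F.symm g), LinearIsometryEquiv.apply_symm_apply, ← hu, MeasureTheory.L2.inner_def]
    refine integral_congr_ae ?_
    filter_upwards [hg] with x hx
    rw [RCLike.inner_apply', hx]
    have h3 : (starRingEnd ℂ) ((u : ℝ → ℂ) x) * ((u : ℝ → ℂ) x) = ((w x : ℝ) : ℂ) := by
      have h4 := congrFun hinnerpt x
      rwa [RCLike.inner_apply'] at h4
    calc (starRingEnd ℂ) ((u : ℝ → ℂ) x) * (b x * ((u : ℝ → ℂ) x))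
        = b x * ((starRingEnd ℂ) ((u : ℝ → ℂ) x) * ((u : ℝ → ℂ) x)) := by ring
      _ = b x * ((w x : ℝ) : ℂ) := by rw [h3]
  -- split off the constant part
  have hsplit : ∫ x, b x * ((w x : ℝ) : ℂ)
      = b ξ₀ * (R : ℂ) + ∫ x, (b x - b ξ₀) * ((w x : ℝ) : ℂ) := by
    have hIb : Integrable (fun x => b x * ((w x : ℝ) : ℂ)) volume :=
      Integrable.bdd_mul hiw.ofReal hb.aestronglyMeasurable (Filter.Eventually.of_forall hM)
    have hIc : Integrable (fun x => b ξ₀ * ((w x : ℝ) : ℂ)) volume := hiw.ofReal.const_mul _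
    have h1 : ∫ x, (b x - b ξ₀) * ((w x : ℝ) : ℂ)
        = (∫ x, b x * ((w x : ℝ) : ℂ)) - ∫ x, b ξ₀ * ((w x : ℝ) : ℂ) := by
      rw [← integral_sub hIb hIc]
      congr 1
      funext x
      ring
    have h2 : ∫ x, b ξ₀ * ((w x : ℝ) : ℂ) = b ξ₀ * (R : ℂ) := by
      rw [integral_const_mul]
      congr 1
      rw [show (∫ a, ((w a : ℝ) : ℂ)) = ((∫ x, w x : ℝ) : ℂ) from integral_ofReal, hwR]
    rw [h1, h2]
    ring
  -- the far set
  set far : Set ℝ := Set.Iic (ξ₀ - δ) ∪ Set.Ici (ξ₀ + δ) with hfar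
  have hfarmeas : MeasurableSet far := measurableSet_Iic.union measurableSet_Ici
  have hfar_iff : ∀ x : ℝ, x ∈ far ↔ δ ≤ |x - ξ₀| := by
    intro x
    rw [hfar]
    simp only [Set.mem_union, Set.mem_Iic, Set.mem_Ici]
    rw [le_abs]
    constructor
    · rintro (h | h)
      · right; simp only [neg_sub]; linarith
      · left; linarith
    · rintro (h | h)
      · right; linarith
      · left; simp only [neg_sub] at h; linarith
  have hfar_ne : ∀ x ∈ far, x ≠ ξ₀ := by
    intro x hx h
    have h1 := (hfar_iff x).1 hx
    rw [h] at h1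
    simp only [sub_self, abs_zero] at h1
    linarith
  have hwbound : ∀ᵐ x ∂(volume : Measure ℝ), x ∈ far → w x ≤ s⁻¹^2 * 4 * ((x - ξ₀)^2)⁻¹ := by
    filter_upwards [hvV] with x hx hxf
    rw [hwx, hx]
    exact hVbound x (hfar_ne x hxf)
  have hIci := integral_inv_sq_Ici ξ₀ δ hδ
  have hIic := integral_inv_sq_Iic ξ₀ δ hδ
  have hφint : IntegrableOn (fun x : ℝ => s⁻¹^2 * 4 * ((x - ξ₀)^2)⁻¹) far volume := by
    rw [hfar]
    exact IntegrableOn.union (hIic.1.const_mul _) (hIci.1.const_mul _)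
  have hfarφ : ∫ x in far, s⁻¹^2 * 4 * ((x - ξ₀)^2)⁻¹ = s⁻¹^2 * 8 / δ := by
    have hdisj : Disjoint (Set.Iic (ξ₀ - δ)) (Set.Ici (ξ₀ + δ)) := by
      refine Set.disjoint_left.mpr fun x hx1 hx2 => ?_
      simp only [Set.mem_Iic] at hx1
      simp only [Set.mem_Ici] at hx2
      linarith
    rw [hfar, setIntegral_union hdisj measurableSet_Ici (hIic.1.const_mul _)
      (hIci.1.const_mul _), integral_const_mul, integral_const_mul, hIic.2, hIci.2]
    rw [div_eq_mul_inv]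
    ring
  have hfarw : ∫ x in far, w x ≤ s⁻¹^2 * 8 / δ := by
    rw [← hfarφ]
    exact setIntegral_mono_ae_restrict hiw.integrableOn hφint
      ((ae_restrict_iff' hfarmeas).2 hwbound)
  -- pointwise bound and the error estimate
  have hptb : ∀ x : ℝ, ‖b x - b ξ₀‖ * w x
      ≤ ε * w x + Set.indicator far (fun x => 2 * M * w x) x := by
    intro x
    by_cases hxf : x ∈ far
    · rw [Set.indicator_of_mem hxf]
      have h1 : ‖b x - b ξ₀‖ ≤ 2 * M := by
        refine le_trans (norm_sub_le _ _) ?_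
        have := hM x
        have := hM ξ₀
        linarith
      have h2 := mul_le_mul_of_nonneg_right h1 (hw0 x)
      nlinarith [hw0 x, hε]
    · rw [Set.indicator_of_notMem hxf]
      have h1 : |x - ξ₀| < δ := by
        by_contra h
        exact hxf ((hfar_iff x).2 (le_of_not_gt h))
      have h2 := mul_le_mul_of_nonneg_right (hnear x h1) (hw0 x)
      rw [add_zero]
      exact h2
  have hIlhs : Integrable (fun x => ‖b x - b ξ₀‖ * w x) volume := by
    refine Integrable.bdd_mul (c := M + ‖b ξ₀‖) hiw ((hb.sub continuous_const).norm.aestronglyMeasurable) ?_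
    refine Filter.Eventually.of_forall fun x => ?_
    rw [Real.norm_of_nonneg (norm_nonneg _)]
    exact le_trans (norm_sub_le _ _) (add_le_add_left (hM x) _)
  have hEbound : ‖∫ x, (b x - b ξ₀) * ((w x : ℝ) : ℂ)‖
      ≤ ε * R + 2 * M * (s⁻¹^2 * 8 / δ) := by
    refine le_trans (norm_integral_le_integral_norm _) ?_
    have h1 : ∀ x : ℝ, ‖(b x - b ξ₀) * ((w x : ℝ) : ℂ)‖ = ‖b x - b ξ₀‖ * w x := by
      intro x
      rw [norm_mul, Complex.norm_real, Real.norm_of_nonneg (hw0 x)]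
    rw [integral_congr_ae (Filter.Eventually.of_forall h1)]
    refine le_trans (integral_mono hIlhs ((hiw.const_mul ε).add
      ((hiw.const_mul (2*M)).indicator hfarmeas)) hptb) ?_
    simp only [Pi.add_apply]
    rw [integral_add (hiw.const_mul ε) ((hiw.const_mul (2*M)).indicator hfarmeas),
      integral_const_mul, hwR, integral_indicator hfarmeas, integral_const_mul]
    have h2 : 2 * M * ∫ x in far, w x ≤ 2 * M * (s⁻¹^2 * 8 / δ) :=
      mul_le_mul_of_nonneg_left hfarw (by linarith)
    linarith
  -- conclusion
  have h1 : ‖b ξ₀ * (R : ℂ)‖ = ‖b ξ₀‖ * R := by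
    rw [norm_mul, Complex.norm_real, Real.norm_of_nonneg hR.le]
  have h2 : ‖(inner ℂ ψ (T ψ) : ℂ)‖ ≤ ‖T‖ * R := by
    refine le_trans (norm_inner_le_norm _ _) ?_
    calc ‖ψ‖ * ‖T ψ‖ ≤ ‖ψ‖ * (‖T‖ * ‖ψ‖) :=
          mul_le_mul_of_nonneg_left (T.le_opNorm ψ) (norm_nonneg _)
      _ = ‖T‖ * ‖ψ‖^2 := by ring
      _ = ‖T‖ * R := by rw [hψsq]
  have h3 : b ξ₀ * (R : ℂ) = (inner ℂ ψ (T ψ) : ℂ) - ∫ x, (b x - b ξ₀) * ((w x : ℝ) : ℂ) := by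
    rw [hInn, hsplit]
    ring
  calc ‖b ξ₀‖ * R = ‖b ξ₀ * (R : ℂ)‖ := h1.symm
    _ ≤ ‖(inner ℂ ψ (T ψ) : ℂ)‖ + ‖∫ x, (b x - b ξ₀) * ((w x : ℝ) : ℂ)‖ := by
        rw [h3]
        exact norm_sub_le _ _
    _ ≤ ‖T‖ * R + (ε * R + 2 * M * (s⁻¹^2 * 8 / δ)) := add_le_add h2 hEbound
    _ = ‖T‖ * R + ε * R + 2 * M * (s⁻¹^2 * 8 / δ) := by ring

lemma opNorm_truncMult_ge (F : L2R ≃ₗᵢ[ℂ] L2R) (hF : FourierConvention F) (b : ℝ → ℂ)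
    (hb : Continuous b) {M : ℝ} (hM : ∀ x, ‖b x‖ ≤ M)
    (T : L2pos →L[ℂ] L2pos) (hT : IsTruncMult F b T) (ξ₀ : ℝ) : ‖b ξ₀‖ ≤ ‖T‖ := by
  have hM0 : 0 ≤ M := le_trans (norm_nonneg _) (hM 0)
  refine le_of_forall_pos_le_add fun ε hε => ?_
  obtain ⟨δ, hδ, hnear⟩ : ∃ δ > 0, ∀ x : ℝ, |x - ξ₀| < δ → ‖b x - b ξ₀‖ ≤ ε/2 := by
    obtain ⟨δ, hδ, h⟩ := Metric.continuousAt_iff.mp hb.continuousAt (ε/2) (by linarith)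
    refine ⟨δ, hδ, fun x hx => ?_⟩
    have h2 := h (x := x) (by rwa [Real.dist_eq])
    rw [dist_eq_norm] at h2
    exact h2.le
  set C : ℝ := 2 * M * ((Real.sqrt (2*Real.pi))⁻¹^2 * 8 / δ) with hC
  have hC0 : 0 ≤ C := by
    rw [hC]
    positivity
  set R : ℝ := max 1 (2 * C / ε) with hR
  have hR1 : (1:ℝ) ≤ R := le_max_left _ _
  have hR0 : 0 < R := lt_of_lt_of_le one_pos hR1
  have hkey := key_estimate F hF b hb hM T hT ξ₀ hδ (by linarith : (0:ℝ) ≤ ε/2) hnear hR0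
  have hCR : C ≤ (ε/2) * R := by
    have h1 : 2 * C / ε ≤ R := le_max_right _ _
    calc C = (ε/2) * (2 * C / ε) := by field_simp
      _ ≤ (ε/2) * R := mul_le_mul_of_nonneg_left h1 (by linarith)
  have h2 : ‖b ξ₀‖ * R ≤ (‖T‖ + ε) * R := by
    calc ‖b ξ₀‖ * R ≤ ‖T‖ * R + (ε/2) * R + C := hkey
      _ ≤ ‖T‖ * R + (ε/2) * R + (ε/2) * R := by linarith
      _ = (‖T‖ + ε) * R := by ring
  exact le_of_mul_le_mul_right h2 hR0

lemma opNorm_truncMult_eq (F : L2R ≃ₗᵢ[ℂ] L2R) (hF : FourierConvention F) (b : ℝ → ℂ)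
    (hb : Continuous b) {M : ℝ} (hM : ∀ x, ‖b x‖ ≤ M)
    (T : L2pos →L[ℂ] L2pos) (hT : IsTruncMult F b T) : ‖T‖ = ⨆ x : ℝ, ‖b x‖ := by
  have hbdd : BddAbove (Set.range fun x : ℝ => ‖b x‖) := by
    refine ⟨M, ?_⟩
    rintro r ⟨x, rfl⟩
    exact hM x
  refine le_antisymm ?_ ?_
  · exact opNorm_truncMult_le F b (M := ⨆ x : ℝ, ‖b x‖) (fun x => le_ciSup hbdd x) T hT
  · exact ciSup_le fun x => opNorm_truncMult_ge F hF b hb hM T hT x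

section Symbol

lemma bound_of_tendsto (b : ℝ → ℂ) (hb : Continuous b) (c c' : ℂ)
    (ht : Tendsto b atTop (nhds c)) (hbot : Tendsto b atBot (nhds c')) :
    ∃ M, ∀ x, ‖b x‖ ≤ M := by
  have h1 : ∀ᶠ x in atTop, ‖b x‖ ≤ ‖c‖ + 1 :=
    ht.norm.eventually (eventually_le_nhds (lt_add_one ‖c‖))
  have h2 : ∀ᶠ x in atBot, ‖b x‖ ≤ ‖c'‖ + 1 :=
    hbot.norm.eventually (eventually_le_nhds (lt_add_one ‖c'‖))
  obtain ⟨N₁, hN₁⟩ := eventually_atTop.mp h1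
  obtain ⟨N₂, hN₂⟩ := eventually_atBot.mp h2
  obtain ⟨K, hK⟩ := (isCompact_Icc (a := N₂) (b := N₁)).exists_bound_of_continuousOn
    hb.continuousOn
  refine ⟨max K (max (‖c‖ + 1) (‖c'‖ + 1)), fun x => ?_⟩
  rcases le_total x N₂ with h | h
  · exact le_trans (hN₂ x h) (le_trans (le_max_right _ _) (le_max_right _ _))
  rcases le_total N₁ x with h' | h'
  · exact le_trans (hN₁ x h') (le_trans (le_max_left _ _) (le_max_right _ _))
  · exact le_trans (hK x ⟨h, h'⟩) (le_max_left _ _)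

variable {k : ℕ} (p₀ : EuclideanSpace ℝ (Fin k) × ℝ → ℂ)

lemma prodd_ne_zero {ξ' : EuclideanSpace ℝ (Fin k)} (hξ' : ξ' ≠ 0) (t : ℝ) :
    ((ξ', t) : EuclideanSpace ℝ (Fin k) × ℝ) ≠ 0 :=
  fun h => hξ' (Prod.mk_eq_zero.mp h).1

lemma contAt (hcont : ContinuousOn p₀ {ξ | ξ ≠ 0})
    {ξ : EuclideanSpace ℝ (Fin k) × ℝ} (hξ : ξ ≠ 0) : ContinuousAt p₀ ξ := by
  have hopen : IsOpen {ξ : EuclideanSpace ℝ (Fin k) × ℝ | ξ ≠ 0} := isOpen_compl_singleton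
  exact hcont.continuousAt (hopen.mem_nhds hξ)

lemma slice_continuous (hcont : ContinuousOn p₀ {ξ | ξ ≠ 0})
    {ξ' : EuclideanSpace ℝ (Fin k)} (hξ' : ξ' ≠ 0) :
    Continuous (fun t : ℝ => p₀ (ξ', t)) := by
  rw [continuous_iff_continuousAt]
  intro t
  exact (contAt p₀ hcont (prodd_ne_zero hξ' t)).comp
    ((continuous_const.prodMk continuous_id).continuousAt)

lemma slice_tendsto_atTop (hcont : ContinuousOn p₀ {ξ | ξ ≠ 0})
    (hhom : ∀ r : ℝ, 0 < r → ∀ ξ : EuclideanSpace ℝ (Fin k) × ℝ, ξ ≠ 0 → p₀ (r • ξ) = p₀ ξ)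
    {ξ' : EuclideanSpace ℝ (Fin k)} (hξ' : ξ' ≠ 0) :
    Tendsto (fun t : ℝ => p₀ (ξ', t)) atTop
      (nhds (p₀ ((0 : EuclideanSpace ℝ (Fin k)), (1:ℝ)))) := by
  have hne : ((0 : EuclideanSpace ℝ (Fin k)), (1:ℝ)) ≠ 0 := fun h => by
    simpa using (Prod.mk_eq_zero.mp h).2
  have h1 : Tendsto (fun t : ℝ => ((t⁻¹ • ξ' : EuclideanSpace ℝ (Fin k)), (1:ℝ))) atTop
      (nhds ((0 : EuclideanSpace ℝ (Fin k)), (1:ℝ))) := by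
    refine Tendsto.prodMk_nhds ?_ tendsto_const_nhds
    have h2 : Tendsto (fun t : ℝ => t⁻¹ • ξ') atTop (nhds ((0:ℝ) • ξ')) :=
      Tendsto.smul_const tendsto_inv_atTop_zero ξ'
    rwa [zero_smul] at h2
  have h3 : Tendsto (fun t : ℝ => p₀ (t⁻¹ • ξ', 1)) atTop
      (nhds (p₀ ((0 : EuclideanSpace ℝ (Fin k)), (1:ℝ)))) :=
    (contAt p₀ hcont hne).tendsto.comp h1
  refine Tendsto.congr' ?_ h3
  filter_upwards [eventually_gt_atTop (0:ℝ)] with t ht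
  have h4 := hhom t⁻¹ (inv_pos.mpr ht) (ξ', t) (prodd_ne_zero hξ' t)
  rw [Prod.smul_mk, smul_eq_mul, inv_mul_cancel₀ (ne_of_gt ht)] at h4
  exact h4

lemma slice_tendsto_atBot (hcont : ContinuousOn p₀ {ξ | ξ ≠ 0})
    (hhom : ∀ r : ℝ, 0 < r → ∀ ξ : EuclideanSpace ℝ (Fin k) × ℝ, ξ ≠ 0 → p₀ (r • ξ) = p₀ ξ)
    {ξ' : EuclideanSpace ℝ (Fin k)} (hξ' : ξ' ≠ 0) :
    Tendsto (fun t : ℝ => p₀ (ξ', t)) atBot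
      (nhds (p₀ ((0 : EuclideanSpace ℝ (Fin k)), (-1:ℝ)))) := by
  have hne : ((0 : EuclideanSpace ℝ (Fin k)), (-1:ℝ)) ≠ 0 := fun h => by
    simpa using (Prod.mk_eq_zero.mp h).2
  have h1 : Tendsto (fun t : ℝ => ((-t⁻¹ • ξ' : EuclideanSpace ℝ (Fin k)), (-1:ℝ))) atBot
      (nhds ((0 : EuclideanSpace ℝ (Fin k)), (-1:ℝ))) := by
    refine Tendsto.prodMk_nhds ?_ tendsto_const_nhds
    have h0 : Tendsto (fun t : ℝ => -t⁻¹) atBot (nhds (0:ℝ)) := by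
      have h2 : Tendsto (fun t : ℝ => ((-t)⁻¹ : ℝ)) atBot (nhds 0) :=
        tendsto_inv_atTop_zero.comp tendsto_neg_atBot_atTop
      exact h2.congr fun t => inv_neg
    have h2 : Tendsto (fun t : ℝ => (-t⁻¹) • ξ') atBot (nhds ((0:ℝ) • ξ')) :=
      Tendsto.smul_const h0 ξ'
    rwa [zero_smul] at h2
  have h3 : Tendsto (fun t : ℝ => p₀ (-t⁻¹ • ξ', -1)) atBot
      (nhds (p₀ ((0 : EuclideanSpace ℝ (Fin k)), (-1:ℝ)))) :=
    (contAt p₀ hcont hne).tendsto.comp h1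
  refine Tendsto.congr' ?_ h3
  filter_upwards [eventually_lt_atBot (0:ℝ)] with t ht
  have hpos : 0 < -t⁻¹ := by
    rw [neg_pos]
    exact inv_lt_zero'.mpr ht
  have h4 := hhom (-t⁻¹) hpos (ξ', t) (prodd_ne_zero hξ' t)
  rw [Prod.smul_mk, smul_eq_mul] at h4
  have h5 : -t⁻¹ * t = -1 := by
    rw [neg_mul, inv_mul_cancel₀ (ne_of_lt ht)]
  rw [h5] at h4
  exact h4

end Symbol

section Assemble

variable {k : ℕ} (p₀ : EuclideanSpace ℝ (Fin k) × ℝ → ℂ)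

lemma global_bound (hcont : ContinuousOn p₀ {ξ | ξ ≠ 0})
    (hhom : ∀ r : ℝ, 0 < r → ∀ ξ : EuclideanSpace ℝ (Fin k) × ℝ, ξ ≠ 0 → p₀ (r • ξ) = p₀ ξ) :
    ∃ K : ℝ, 0 ≤ K ∧ ∀ ξ : EuclideanSpace ℝ (Fin k) × ℝ, ξ ≠ 0 → ‖p₀ ξ‖ ≤ K := by
  have hsub : Metric.sphere (0 : EuclideanSpace ℝ (Fin k) × ℝ) 1 ⊆ {ξ | ξ ≠ 0} := by
    intro x hx
    have h1 : ‖x‖ = 1 := mem_sphere_zero_iff_norm.mp hx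
    intro h
    rw [h, norm_zero] at h1
    exact one_ne_zero h1.symm
  obtain ⟨K, hK⟩ := (isCompact_sphere (0 : EuclideanSpace ℝ (Fin k) × ℝ)
    1).exists_bound_of_continuousOn (hcont.mono hsub)
  refine ⟨max K 0, le_max_right _ _, fun ξ hξ => ?_⟩
  have hξn : ‖ξ‖ ≠ 0 := norm_ne_zero_iff.mpr hξ
  have hpos : 0 < ‖ξ‖⁻¹ := inv_pos.mpr (lt_of_le_of_ne (norm_nonneg ξ) (Ne.symm hξn))
  have h2 := hhom ‖ξ‖⁻¹ hpos ξ hξ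
  have h3 : ‖ξ‖⁻¹ • ξ ∈ Metric.sphere (0 : EuclideanSpace ℝ (Fin k) × ℝ) 1 := by
    rw [mem_sphere_zero_iff_norm, norm_smul, norm_inv, norm_norm, inv_mul_cancel₀ hξn]
  calc ‖p₀ ξ‖ = ‖p₀ (‖ξ‖⁻¹ • ξ)‖ := by rw [h2]
    _ ≤ K := hK _ h3
    _ ≤ max K 0 := le_max_left _ _

lemma sup_scale
    (hhom : ∀ r : ℝ, 0 < r → ∀ ξ : EuclideanSpace ℝ (Fin k) × ℝ, ξ ≠ 0 → p₀ (r • ξ) = p₀ ξ)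
    (s : ℝ) (hs : 0 < s) (ξ' : EuclideanSpace ℝ (Fin k)) (hξ' : ξ' ≠ 0) :
    (⨆ t : ℝ, ‖p₀ (s • ξ', t)‖) = ⨆ t : ℝ, ‖p₀ (ξ', t)‖ := by
  have h1 : ∀ t : ℝ, p₀ (s • ξ', t) = p₀ (ξ', s⁻¹ * t) := by
    intro t
    have h2 := hhom s hs (ξ', s⁻¹ * t) (prodd_ne_zero hξ' _)
    rw [Prod.smul_mk, smul_eq_mul, mul_inv_cancel_left₀ (ne_of_gt hs)] at h2
    exact h2
  simp only [h1]
  have hsurj : Function.Surjective (fun t : ℝ => s⁻¹ * t) := fun y =>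
    ⟨s * y, by show s⁻¹ * (s * y) = y; rw [inv_mul_cancel_left₀ (ne_of_gt hs)]⟩
  exact hsurj.iSup_comp (g := fun t => ‖p₀ (ξ', t)‖)

end Assemble

end KeyEstimate

end TruncAux

/-- for a continuous zero-degree homogeneous symbol `p₀` on `ℝⁿ ∖ {0}`
(`n = k+1 ≥ 2`, coordinates `ξ = (ξ′, ξₙ)`) with `p₀(0,1) = p₀(0,−1)`:
(i) each `p₀(ξ′,·)`, `ξ′ ≠ 0`, is admissible;
(ii) `‖p₀(ξ′,·)(D)₊‖ = sup_{ξₙ} |p₀(ξ′,ξₙ)|`, and this norm is independent of `|ξ′|`;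
(iii) `sup_{ξ′≠0} ‖p₀(ξ′,·)(D)₊‖ = sup_{ξ≠0} |p₀(ξ)|`. -/
theorem homogeneous_symbol_truncMult_norm
    (F : L2R ≃ₗᵢ[ℂ] L2R) (hF : FourierConvention F)
    (k : ℕ) (hk : 1 ≤ k)
    (p₀ : EuclideanSpace ℝ (Fin k) × ℝ → ℂ)
    (hcont : ContinuousOn p₀ {ξ | ξ ≠ 0})
    (hhom : ∀ r : ℝ, 0 < r → ∀ ξ : EuclideanSpace ℝ (Fin k) × ℝ, ξ ≠ 0 →
      p₀ (r • ξ) = p₀ ξ)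
    (htrans : p₀ ((0 : EuclideanSpace ℝ (Fin k)), (1:ℝ))
      = p₀ ((0 : EuclideanSpace ℝ (Fin k)), (-1:ℝ))) :
    -- (i)
    (∀ ξ' : EuclideanSpace ℝ (Fin k), ξ' ≠ 0 →
      Admissible (fun ξn : ℝ => p₀ (ξ', ξn))) ∧
    -- (ii), first part
    (∀ ξ' : EuclideanSpace ℝ (Fin k), ξ' ≠ 0 →
      ∀ T : L2pos →L[ℂ] L2pos, IsTruncMult F (fun ξn : ℝ => p₀ (ξ', ξn)) T →
        ‖T‖ = ⨆ ξn : ℝ, ‖p₀ (ξ', ξn)‖) ∧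
    -- (ii), independence of |ξ′|
    (∀ s : ℝ, 0 < s → ∀ ξ' : EuclideanSpace ℝ (Fin k), ξ' ≠ 0 →
      ∀ T T' : L2pos →L[ℂ] L2pos,
        IsTruncMult F (fun ξn : ℝ => p₀ (ξ', ξn)) T →
        IsTruncMult F (fun ξn : ℝ => p₀ (s • ξ', ξn)) T' →
          ‖T'‖ = ‖T‖) ∧
    -- (iii)
    sSup {r : ℝ | ∃ ξ' : EuclideanSpace ℝ (Fin k), ξ' ≠ 0 ∧
        ∃ T : L2pos →L[ℂ] L2pos, IsTruncMult F (fun ξn : ℝ => p₀ (ξ', ξn)) T ∧ r = ‖T‖}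
      = sSup {r : ℝ | ∃ ξ : EuclideanSpace ℝ (Fin k) × ℝ, ξ ≠ 0 ∧ r = ‖p₀ ξ‖} := by
  obtain ⟨K, hK0, hKb⟩ := TruncAux.global_bound p₀ hcont hhom
  have hMb : ∀ ξ' : EuclideanSpace ℝ (Fin k), ξ' ≠ 0 → ∀ t : ℝ, ‖p₀ (ξ', t)‖ ≤ K :=
    fun ξ' h t => hKb _ (TruncAux.prodd_ne_zero h t)
  have hi : ∀ ξ' : EuclideanSpace ℝ (Fin k), ξ' ≠ 0 →
      Admissible (fun ξn : ℝ => p₀ (ξ', ξn)) := by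
    intro ξ' hξ'
    refine ⟨TruncAux.slice_continuous p₀ hcont hξ',
      p₀ ((0 : EuclideanSpace ℝ (Fin k)), (1:ℝ)),
      TruncAux.slice_tendsto_atTop p₀ hcont hhom hξ', ?_⟩
    rw [htrans]
    exact TruncAux.slice_tendsto_atBot p₀ hcont hhom hξ'
  have hii : ∀ ξ' : EuclideanSpace ℝ (Fin k), ξ' ≠ 0 →
      ∀ T : L2pos →L[ℂ] L2pos, IsTruncMult F (fun ξn : ℝ => p₀ (ξ', ξn)) T →
        ‖T‖ = ⨆ ξn : ℝ, ‖p₀ (ξ', ξn)‖ := by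
    intro ξ' hξ' T hT
    exact TruncAux.opNorm_truncMult_eq F hF _ (TruncAux.slice_continuous p₀ hcont hξ')
      (hMb ξ' hξ') T hT
  have hex : ∀ ξ' : EuclideanSpace ℝ (Fin k), ξ' ≠ 0 →
      ∃ T : L2pos →L[ℂ] L2pos, IsTruncMult F (fun ξn : ℝ => p₀ (ξ', ξn)) T :=
    fun ξ' hξ' => ⟨TruncAux.truncOp F _
      ((TruncAux.slice_continuous p₀ hcont hξ').aestronglyMeasurable) (hMb ξ' hξ'),
      TruncAux.isTruncMult_truncOp F _ _ _⟩
  refine ⟨hi, hii, ?_, ?_⟩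
  · intro s hs ξ' hξ' T T' hT hT'
    have h1 := hii ξ' hξ' T hT
    have h2 := hii (s • ξ') (smul_ne_zero (ne_of_gt hs) hξ') T' hT'
    rw [h1, h2, TruncAux.sup_scale p₀ hhom s hs ξ' hξ']
  · have hne01 : ((0 : EuclideanSpace ℝ (Fin k)), (1:ℝ)) ≠ 0 :=
      fun h => one_ne_zero (Prod.mk_eq_zero.mp h).2
    have hBne : {r : ℝ | ∃ ξ : EuclideanSpace ℝ (Fin k) × ℝ, ξ ≠ 0 ∧ r = ‖p₀ ξ‖}.Nonempty :=
      ⟨‖p₀ ((0 : EuclideanSpace ℝ (Fin k)), (1:ℝ))‖, ((0 : EuclideanSpace ℝ (Fin k)), (1:ℝ)),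
        hne01, rfl⟩
    have hBbdd : BddAbove {r : ℝ | ∃ ξ : EuclideanSpace ℝ (Fin k) × ℝ, ξ ≠ 0 ∧ r = ‖p₀ ξ‖} := by
      refine ⟨K, ?_⟩
      rintro r ⟨ξ, hξ, rfl⟩
      exact hKb ξ hξ
    have hsupbdd : ∀ ξ' : EuclideanSpace ℝ (Fin k), ξ' ≠ 0 →
        BddAbove (Set.range fun t : ℝ => ‖p₀ (ξ', t)‖) := by
      intro ξ' h
      refine ⟨K, ?_⟩
      rintro r ⟨t, rfl⟩
      exact hMb ξ' h t
    have hξ'₀ne : ((EuclideanSpace.basisFun (Fin k) ℝ).toBasis ⟨0, hk⟩ :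
        EuclideanSpace ℝ (Fin k)) ≠ 0 := Module.Basis.ne_zero _ _
    set ξ'₀ : EuclideanSpace ℝ (Fin k) := (EuclideanSpace.basisFun (Fin k) ℝ).toBasis ⟨0, hk⟩
      with hξ'₀def
    have hAchar : ∀ ξ' : EuclideanSpace ℝ (Fin k), ξ' ≠ 0 →
        (⨆ t : ℝ, ‖p₀ (ξ', t)‖) ∈ {r : ℝ | ∃ ξ' : EuclideanSpace ℝ (Fin k), ξ' ≠ 0 ∧
          ∃ T : L2pos →L[ℂ] L2pos, IsTruncMult F (fun ξn : ℝ => p₀ (ξ', ξn)) T ∧ r = ‖T‖} := by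
      intro ξ' hξ'
      obtain ⟨T, hT⟩ := hex ξ' hξ'
      exact ⟨ξ', hξ', T, hT, (hii ξ' hξ' T hT).symm⟩
    have hAne : {r : ℝ | ∃ ξ' : EuclideanSpace ℝ (Fin k), ξ' ≠ 0 ∧
        ∃ T : L2pos →L[ℂ] L2pos, IsTruncMult F (fun ξn : ℝ => p₀ (ξ', ξn)) T ∧
          r = ‖T‖}.Nonempty := ⟨_, hAchar ξ'₀ hξ'₀ne⟩
    have hAbdd : BddAbove {r : ℝ | ∃ ξ' : EuclideanSpace ℝ (Fin k), ξ' ≠ 0 ∧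
        ∃ T : L2pos →L[ℂ] L2pos, IsTruncMult F (fun ξn : ℝ => p₀ (ξ', ξn)) T ∧ r = ‖T‖} := by
      refine ⟨K, ?_⟩
      rintro r ⟨ξ', hξ', T, hT, rfl⟩
      rw [hii ξ' hξ' T hT]
      exact ciSup_le fun t => hMb ξ' hξ' t
    refine le_antisymm ?_ ?_
    · refine csSup_le hAne ?_
      rintro r ⟨ξ', hξ', T, hT, rfl⟩
      rw [hii ξ' hξ' T hT]
      exact ciSup_le fun t => le_csSup hBbdd ⟨(ξ', t), TruncAux.prodd_ne_zero hξ' t, rfl⟩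
    · refine csSup_le hBne ?_
      rintro r ⟨⟨ξ₁, ξ₂⟩, hξ, rfl⟩
      by_cases h1 : ξ₁ = 0
      · subst h1
        have hξ₂ : ξ₂ ≠ 0 := fun h => hξ (Prod.mk_eq_zero.mpr ⟨rfl, h⟩)
        have hval : p₀ ((0 : EuclideanSpace ℝ (Fin k)), ξ₂)
            = p₀ ((0 : EuclideanSpace ℝ (Fin k)), (1:ℝ)) := by
          rcases lt_or_gt_of_ne hξ₂ with h | h
          · have hpos : 0 < -ξ₂⁻¹ := by
              rw [neg_pos]
              exact inv_lt_zero'.mpr h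
            have h4 := hhom (-ξ₂⁻¹) hpos ((0 : EuclideanSpace ℝ (Fin k)), ξ₂) hξ
            rw [Prod.smul_mk, smul_zero, smul_eq_mul, neg_mul,
              inv_mul_cancel₀ (ne_of_lt h)] at h4
            rw [← h4, ← htrans]
          · have hpos : 0 < ξ₂⁻¹ := inv_pos.mpr h
            have h4 := hhom ξ₂⁻¹ hpos ((0 : EuclideanSpace ℝ (Fin k)), ξ₂) hξ
            rw [Prod.smul_mk, smul_zero, smul_eq_mul,
              inv_mul_cancel₀ (ne_of_gt h)] at h4
            rw [← h4]
        rw [hval]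
        have hlim := TruncAux.slice_tendsto_atTop p₀ hcont hhom hξ'₀ne
        have h5 : ‖p₀ ((0 : EuclideanSpace ℝ (Fin k)), (1:ℝ))‖ ≤ ⨆ t : ℝ, ‖p₀ (ξ'₀, t)‖ :=
          le_of_tendsto hlim.norm (Filter.Eventually.of_forall fun t =>
            le_ciSup (hsupbdd ξ'₀ hξ'₀ne) t)
        exact le_trans h5 (le_csSup hAbdd (hAchar ξ'₀ hξ'₀ne))
      · exact le_trans (le_ciSup (hsupbdd ξ₁ h1) ξ₂) (le_csSup hAbdd (hAchar ξ₁ h1))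

end
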